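/- For every g ∈ H, the expansion g = (π/2)^m · Σ_{p ∈ (π/2)·{0,1,2,3}^m} ⟨g, K_p⟩_H · K_p holds, where the sum runs over all 4^m points p of the grid (π/2)·{0,1,2,3}^m. -/

import Mathlib

open scoped Real BigOperators
open MeasureTheory Filter

noncomputable section

/-- The frequency grid `{-1,0,1}^m`. -/
def Omega (m : ℕ) : Finset (Fin m → ℤ) :=
  Fintype.piFinset fun _ => ({-1, 0, 1} : Finset ℤ)

/-- `ω ⬝ x = Σ_j ω_j x_j`. -/
def dotZ {m : ℕ} (ω : Fin m → ℤ) (x : Fin m → ℝ) : ℝ := ∑ j, (ω j : ℝ) * x j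

/-- The kernel `K(x,z) = (2π)^{-m} Σ_{ω∈{-1,0,1}^m} e^{i ω·(x-z)}` (a real number). -/
def Kker (m : ℕ) (x z : Fin m → ℝ) : ℝ :=
  ((2 * Real.pi) ^ m)⁻¹ *
    (∑ ω ∈ Omega m, Complex.exp (Complex.I * (dotZ ω (x - z) : ℝ))).re

/-- `K_x = K(x, ·)`. -/
def Kfun (m : ℕ) (x : Fin m → ℝ) : (Fin m → ℝ) → ℝ := fun z => Kker m x z

/-- The space `H` of real functions of the form `Σ_{ω∈{-1,0,1}^m} c_ω e^{i ω·z}`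
with `c_{-ω} = conj (c_ω)`. -/
def Hset (m : ℕ) : Set ((Fin m → ℝ) → ℝ) :=
  { g | ∃ c : (Fin m → ℤ) → ℂ,
      (∀ ω, c (-ω) = starRingEnd ℂ (c ω)) ∧
      ∀ z, (g z : ℂ) = ∑ ω ∈ Omega m, c ω * Complex.exp (Complex.I * (dotZ ω z : ℝ)) }

/-- The cube `[-π,π]^m`. -/
def box (m : ℕ) : Set (Fin m → ℝ) := Set.univ.pi fun _ => Set.Icc (-Real.pi) Real.pi

/-- Inner product `⟨g₁,g₂⟩_H = ∫_{[-π,π]^m} g₁ g₂`. -/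
def innerH (m : ℕ) (g₁ g₂ : (Fin m → ℝ) → ℝ) : ℝ := ∫ z in box m, g₁ z * g₂ z

/-- Partial derivative in direction `j`. -/
def partialD {m : ℕ} (j : Fin m) (g : (Fin m → ℝ) → ℝ) : (Fin m → ℝ) → ℝ :=
  fun x => fderiv ℝ g x (Pi.single j 1)

/-- Iterated partial derivative `D^α`. -/
def Dmulti {m : ℕ} (α : Fin m → ℕ) (g : (Fin m → ℝ) → ℝ) : (Fin m → ℝ) → ℝ :=
  (List.finRange m).foldr (fun j h => (partialD j)^[α j] h) g

/-- The index set `{-1,1}^{|α|}`, with entries indexed as `𝔦_{j,k}`, `j : Fin m`, `k : Fin (α j)`. -/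
def ShiftSet {m : ℕ} (α : Fin m → ℕ) : Finset (∀ j : Fin m, Fin (α j) → ℤ) :=
  Fintype.piFinset fun j => Fintype.piFinset fun _ => ({-1, 1} : Finset ℤ)

/-- The product `𝔦^{(1,…,1)}` of all entries of `𝔦`. -/
def signProd {m : ℕ} (α : Fin m → ℕ) (ε : ∀ j : Fin m, Fin (α j) → ℤ) : ℝ :=
  ∏ j, ∏ k, ((ε j k : ℤ) : ℝ)

/-- The shifted point `p_{α,𝔦}`, with `j`-th coordinate `(π/2)·((Σ_k 𝔦_{j,k}) mod 4)`,
the representative mod 4 taken in `{0,1,2,3}`. -/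
def pshift {m : ℕ} (α : Fin m → ℕ) (ε : ∀ j : Fin m, Fin (α j) → ℤ) : Fin m → ℝ :=
  fun j => (Real.pi / 2) * (((∑ k, ε j k) % 4 : ℤ) : ℝ)

/-- The point of the grid `(π/2)·{-1,0,1}^m` coded by `s : Fin m → Fin 3`. -/
def pt3 (m : ℕ) (s : Fin m → Fin 3) : Fin m → ℝ :=
  fun j => (Real.pi / 2) * (((s j : ℕ) : ℝ) - 1)

/-- The point of the grid `(π/2)·{0,1,2,3}^m` coded by `s : Fin m → Fin 4`. -/
def pt4 (m : ℕ) (s : Fin m → Fin 4) : Fin m → ℝ :=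
  fun j => (Real.pi / 2) * ((s j : ℕ) : ℝ)

/-- The grid `(π/2)·{-1,0,1}^m ⊆ ℝ^m`. -/
def grid3 (m : ℕ) : Set (Fin m → ℝ) := Set.range (pt3 m)

/-- The grid `(π/2)·{0,1,2,3}^m ⊆ ℝ^m`. -/
def grid4 (m : ℕ) : Set (Fin m → ℝ) := Set.range (pt4 m)

/-- `I_d`: points of `ℝ^m` with at most `d` nonzero coordinates. -/
def Iset (m d : ℕ) : Set (Fin m → ℝ) := { z | Set.ncard { j : Fin m | z j ≠ 0 } ≤ d }

/-- Multiindices `α ∈ (ℤ_{≥0})^m` with `|α| ≤ L`, as a finset. -/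
def multiIdx (m L : ℕ) : Finset (Fin m → ℕ) :=
  (Fintype.piFinset fun _ : Fin m => Finset.range (L + 1)).filter fun α => ∑ j, α j ≤ L

/-- The sup norm `‖g‖_∞ = sup_z |g(z)|`. -/
def supNorm (m : ℕ) (g : (Fin m → ℝ) → ℝ) : ℝ := ⨆ z : Fin m → ℝ, |g z|

/-- The norm `‖g‖_H = √⟨g,g⟩_H`. -/
def normH (m : ℕ) (g : (Fin m → ℝ) → ℝ) : ℝ := Real.sqrt (innerH m g g)

end


noncomputable section
/-- Auxiliary: the complex exponential `e^{i ω·x}`. -/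
def Efun {m : ℕ} (k : Fin m → ℤ) (x : Fin m → ℝ) : ℂ :=
  Complex.exp (Complex.I * (dotZ k x : ℝ))
end


lemma Efun_def {m : ℕ} (k : Fin m → ℤ) (x : Fin m → ℝ) :
    Efun k x = Complex.exp (Complex.I * (dotZ k x : ℝ)) := rfl

lemma dotZ_sub_right {m : ℕ} (ω : Fin m → ℤ) (x z : Fin m → ℝ) :
    dotZ ω (x - z) = dotZ ω x - dotZ ω z := by
  simp [dotZ, mul_sub, Finset.sum_sub_distrib]

lemma dotZ_sub_left {m : ℕ} (ω ω' : Fin m → ℤ) (z : Fin m → ℝ) :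
    dotZ (ω - ω') z = dotZ ω z - dotZ ω' z := by
  simp [dotZ, sub_mul, Finset.sum_sub_distrib]

lemma dotZ_add_left {m : ℕ} (ω ω' : Fin m → ℤ) (z : Fin m → ℝ) :
    dotZ (ω + ω') z = dotZ ω z + dotZ ω' z := by
  simp [dotZ, add_mul, Finset.sum_add_distrib]

lemma dotZ_neg_left {m : ℕ} (ω : Fin m → ℤ) (z : Fin m → ℝ) :
    dotZ (-ω) z = -dotZ ω z := by
  simp [dotZ, Finset.sum_neg_distrib]

lemma contE {m : ℕ} (k : Fin m → ℤ) : Continuous (Efun k) := by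
  apply Complex.continuous_exp.comp
  apply continuous_const.mul
  apply Complex.continuous_ofReal.comp
  exact continuous_finset_sum _ fun j _ => continuous_const.mul (continuous_apply j)

lemma E_mul_shift {m : ℕ} (ω ω' : Fin m → ℤ) (p z : Fin m → ℝ) :
    Efun ω' z * Efun ω (p - z) = Efun ω p * Efun (ω' - ω) z := by
  simp only [Efun, ← Complex.exp_add]
  congr 1
  rw [dotZ_sub_right, dotZ_sub_left]
  push_cast
  ring

lemma E_mul_shift2 {m : ℕ} (ω ω' : Fin m → ℤ) (p z : Fin m → ℝ) :
    Efun ω' p * Efun ω (p - z) = Efun (ω + ω') p * Efun (-ω) z := by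
  simp only [Efun, ← Complex.exp_add]
  congr 1
  rw [dotZ_sub_right, dotZ_add_left, dotZ_neg_left]
  push_cast
  ring

lemma mem_Omega {m : ℕ} {ω : Fin m → ℤ} :
    ω ∈ Omega m ↔ ∀ j, ω j = -1 ∨ ω j = 0 ∨ ω j = 1 := by
  simp [Omega, Fintype.mem_piFinset]

lemma neg_mem_Omega {m : ℕ} {ω : Fin m → ℤ} (h : ω ∈ Omega m) : -ω ∈ Omega m := by
  rw [mem_Omega] at h ⊢
  intro j
  rcases h j with h | h | h <;> simp [h]

lemma abs_le_one_of_mem_Omega {m : ℕ} {ω : Fin m → ℤ} (h : ω ∈ Omega m) (j : Fin m) :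
    |ω j| ≤ 1 := by
  rcases mem_Omega.1 h j with h | h | h <;> simp [h]


lemma neg_one_zpow_inv (k : ℤ) : ((-1 : ℂ) ^ k)⁻¹ = (-1 : ℂ) ^ k := by
  have h : ((-1 : ℂ) ^ k) * ((-1 : ℂ) ^ k) = 1 := by
    rw [← zpow_add₀ (by norm_num : (-1 : ℂ) ≠ 0)]
    have : k + k = 2 * k := by ring
    rw [this, zpow_mul]
    norm_num
  exact inv_eq_of_mul_eq_one_left h

lemma oneD (k : ℤ) :
    ∫ t in Set.Icc (-Real.pi) Real.pi, Complex.exp ((Complex.I * k) * t)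
      = if k = 0 then ((2 * Real.pi : ℝ) : ℂ) else 0 := by
  rw [MeasureTheory.integral_Icc_eq_integral_Ioc,
    ← intervalIntegral.integral_of_le (by linarith [Real.pi_pos] : (-Real.pi) ≤ Real.pi)]
  by_cases hk : k = 0
  · rw [if_pos hk, hk]
    simp only [Int.cast_zero, mul_zero, zero_mul, Complex.exp_zero]
    rw [intervalIntegral.integral_const]
    rw [sub_neg_eq_add, Complex.real_smul]
    push_cast
    ring
  · rw [if_neg hk]
    have hc : (Complex.I * k) ≠ 0 :=
      mul_ne_zero Complex.I_ne_zero (by exact_mod_cast hk)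
    rw [integral_exp_mul_complex hc]
    have h1 : Complex.exp (Complex.I * k * (Real.pi : ℂ)) = (-1 : ℂ) ^ k := by
      rw [show Complex.I * k * (Real.pi : ℂ) = k * ((Real.pi : ℂ) * Complex.I) by ring,
        Complex.exp_int_mul, Complex.exp_pi_mul_I]
    have h2 : Complex.exp (Complex.I * k * ((-Real.pi : ℝ) : ℂ)) = (-1 : ℂ) ^ k := by
      push_cast
      rw [show Complex.I * k * (-(Real.pi : ℂ)) = ((-k : ℤ) : ℂ) * ((Real.pi : ℂ) * Complex.I) by push_cast; ring,
        Complex.exp_int_mul, Complex.exp_pi_mul_I, zpow_neg, neg_one_zpow_inv]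
    rw [h1, h2, sub_self, zero_div]


lemma box_integral_prod {m : ℕ} (f : Fin m → ℝ → ℂ) :
    ∫ z in box m, ∏ j, f j (z j) = ∏ j, ∫ t in Set.Icc (-Real.pi) Real.pi, f j t := by
  have hbox : MeasurableSet (box m) := MeasurableSet.univ_pi fun _ => measurableSet_Icc
  rw [← MeasureTheory.integral_indicator hbox]
  have hind : (box m).indicator (fun z => ∏ j, f j (z j))
      = fun z => ∏ j, (Set.Icc (-Real.pi) Real.pi).indicator (f j) (z j) := by
    funext z
    by_cases hz : z ∈ box m
    · rw [Set.indicator_of_mem hz]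
      have hz' : ∀ j, z j ∈ Set.Icc (-Real.pi) Real.pi := fun j =>
        (Set.mem_univ_pi.1 hz) j
      exact Finset.prod_congr rfl fun j _ => (Set.indicator_of_mem (hz' j) _).symm
    · rw [Set.indicator_of_notMem hz]
      have : ∃ j, z j ∉ Set.Icc (-Real.pi) Real.pi := by
        by_contra h
        push_neg at h
        exact hz (Set.mem_univ_pi.2 h)
      obtain ⟨j, hj⟩ := this
      exact (Finset.prod_eq_zero (Finset.mem_univ j)
        (Set.indicator_of_notMem hj _)).symm
  rw [hind, MeasureTheory.integral_fintype_prod_volume_eq_prod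
    (f := fun j => (Set.Icc (-Real.pi) Real.pi).indicator (f j))]
  exact Finset.prod_congr rfl fun j _ =>
    MeasureTheory.integral_indicator measurableSet_Icc

lemma intE {m : ℕ} (k : Fin m → ℤ) :
    ∫ z in box m, Efun k z = if k = 0 then (((2 * Real.pi) ^ m : ℝ) : ℂ) else 0 := by
  have h1 : ∀ z : Fin m → ℝ, Efun k z
      = ∏ j, Complex.exp ((Complex.I * (k j)) * (z j)) := by
    intro z
    rw [Efun, ← Complex.exp_sum]
    congr 1
    rw [dotZ]
    push_cast
    rw [Finset.mul_sum]
    exact Finset.sum_congr rfl fun j _ => by ring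
  simp_rw [h1]
  rw [box_integral_prod (fun j t => Complex.exp ((Complex.I * (k j)) * t))]
  simp_rw [oneD]
  by_cases hk : k = 0
  · rw [if_pos hk]
    subst hk
    simp
  · rw [if_neg hk]
    obtain ⟨j, hj⟩ : ∃ j, k j ≠ 0 := by
      by_contra h
      push_neg at h
      exact hk (funext h)
    exact Finset.prod_eq_zero (Finset.mem_univ j) (by simp [hj])

lemma sum4 (k : ℤ) (hk2 : |k| ≤ 2) :
    ∑ t : Fin 4, Complex.exp (((t : ℕ) : ℂ) * (Complex.I * ((Real.pi / 2 * (k : ℝ) : ℝ) : ℂ)))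
      = if k = 0 then (4 : ℂ) else 0 := by
  by_cases hk : k = 0
  · rw [if_pos hk]
    subst hk
    norm_num
  · rw [if_neg hk]
    set r := Complex.exp (Complex.I * ((Real.pi / 2 * (k : ℝ) : ℝ) : ℂ)) with hr
    have hrt : ∀ t : Fin 4,
        Complex.exp (((t : ℕ) : ℂ) * (Complex.I * ((Real.pi / 2 * (k : ℝ) : ℝ) : ℂ))) = r ^ (t : ℕ) :=
      fun t => Complex.exp_nat_mul _ _
    simp_rw [hrt]
    rw [Fin.sum_univ_eq_sum_range (fun i => r ^ i) 4]
    have hr1 : r ≠ 1 := by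
      rw [hr, Ne, Complex.exp_eq_one_iff]
      rintro ⟨n, hn⟩
      have him := congrArg Complex.im hn
      simp [Complex.mul_im, Complex.mul_re] at him
      -- him : π/2 * k = n * (2π) hopefully
      have hk4 : (k : ℝ) = 4 * n := by
        have hpi := Real.pi_ne_zero
        field_simp at him
        have h' : Real.pi * (k : ℝ) = Real.pi * (4 * n) := by rw [him]; ring
        exact mul_left_cancel₀ hpi h'
      have : k = 4 * n := by exact_mod_cast hk4
      rw [abs_le] at hk2
      omega
    rw [geom_sum_eq hr1]
    have hr4 : r ^ 4 = 1 := by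
      rw [hr, ← Complex.exp_nat_mul]
      rw [show ((4 : ℕ) : ℂ) * (Complex.I * ((Real.pi / 2 * (k : ℝ) : ℝ) : ℂ))
          = (k : ℂ) * (2 * (Real.pi : ℂ) * Complex.I) by push_cast; ring]
      exact Complex.exp_int_mul_two_pi_mul_I k
    rw [hr4, sub_self, zero_div]

lemma sumS {m : ℕ} (k : Fin m → ℤ) (hk : ∀ j, |k j| ≤ 2) :
    ∑ s : Fin m → Fin 4, Efun k (pt4 m s) = if k = 0 then ((4 : ℂ) ^ m) else 0 := by
  have h1 : ∀ s : Fin m → Fin 4, Efun k (pt4 m s)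
      = ∏ j, Complex.exp ((((s j : ℕ) : ℂ)) * (Complex.I * ((Real.pi / 2 * (k j : ℝ) : ℝ) : ℂ))) := by
    intro s
    rw [Efun, ← Complex.exp_sum]
    congr 1
    rw [dotZ]
    push_cast [pt4]
    rw [Finset.mul_sum]
    exact Finset.sum_congr rfl fun j _ => by ring
  simp_rw [h1]
  have h3 := Finset.prod_univ_sum (κ := fun _ : Fin m => Fin 4) (fun _ => Finset.univ)
    (fun j t => Complex.exp (((t : ℕ) : ℂ) * (Complex.I * ((Real.pi / 2 * (k j : ℝ) : ℝ) : ℂ))))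
  rw [Fintype.piFinset_univ] at h3
  rw [← h3]
  have h2 : ∀ j, (∑ t : Fin 4,
      Complex.exp (((t : ℕ) : ℂ) * (Complex.I * ((Real.pi / 2 * (k j : ℝ) : ℝ) : ℂ))))
      = if k j = 0 then (4 : ℂ) else 0 := fun j => sum4 (k j) (hk j)
  rw [Finset.prod_congr rfl fun j _ => h2 j]
  by_cases hk0 : k = 0
  · rw [if_pos hk0]
    subst hk0
    simp
  · rw [if_neg hk0]
    obtain ⟨j, hj⟩ : ∃ j, k j ≠ 0 := by
      by_contra h
      push_neg at h
      exact hk0 (funext h)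
    exact Finset.prod_eq_zero (Finset.mem_univ j) (by simp [hj])

lemma innerH_K {m : ℕ} {g : (Fin m → ℝ) → ℝ} (hg : g ∈ Hset m) (p : Fin m → ℝ) :
    innerH m g (Kfun m p) = g p := by
  obtain ⟨c, hsym, hc⟩ := hg
  have key : ∀ z, g z * Kfun m p z
      = ((2 * Real.pi) ^ m)⁻¹ *
        (∑ ω' ∈ Omega m, ∑ ω ∈ Omega m, (c ω' * Efun ω p) * Efun (ω' - ω) z).re := by
    intro z
    have h2 : (g z : ℂ) * (∑ ω ∈ Omega m, Efun ω (p - z))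
        = ∑ ω' ∈ Omega m, ∑ ω ∈ Omega m, (c ω' * Efun ω p) * Efun (ω' - ω) z := by
      rw [hc z, Finset.sum_mul_sum]
      refine Finset.sum_congr rfl fun ω' _ => Finset.sum_congr rfl fun ω _ => ?_
      rw [show (c ω' * Complex.exp (Complex.I * ((dotZ ω' z : ℝ) : ℂ))) * Efun ω (p - z)
          = c ω' * (Efun ω' z * Efun ω (p - z)) by simp only [Efun_def]; ring,
        E_mul_shift]
      ring
    rw [Kfun, Kker]
    rw [show (∑ ω ∈ Omega m, Complex.exp (Complex.I * ((dotZ ω (p - z) : ℝ) : ℂ)))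
        = ∑ ω ∈ Omega m, Efun ω (p - z) from rfl]
    rw [← h2, Complex.re_ofReal_mul]
    ring
  have hcomp : IsCompact (box m) := isCompact_univ_pi fun _ => isCompact_Icc
  have hIntTerm : ∀ (ω' ω : Fin m → ℤ), IntegrableOn
      (fun z => (c ω' * Efun ω p) * Efun (ω' - ω) z) (box m) := fun ω' ω =>
    (Continuous.continuousOn (continuous_const.mul (contE _))).integrableOn_compact hcomp
  have hInt : IntegrableOn
      (fun z => ∑ ω' ∈ Omega m, ∑ ω ∈ Omega m, (c ω' * Efun ω p) * Efun (ω' - ω) z) (box m) := by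
    refine Continuous.continuousOn ?_ |>.integrableOn_compact hcomp
    exact continuous_finset_sum _ fun ω' _ =>
      continuous_finset_sum _ fun ω _ => continuous_const.mul (contE _)
  rw [innerH]
  simp_rw [key]
  rw [MeasureTheory.integral_const_mul]
  have hre := ContinuousLinearMap.integral_comp_comm Complex.reCLM hInt
  simp only [Complex.reCLM_apply] at hre
  rw [hre]
  have hI : (∫ z in box m, ∑ ω' ∈ Omega m, ∑ ω ∈ Omega m, (c ω' * Efun ω p) * Efun (ω' - ω) z)
      = (((2 * Real.pi) ^ m : ℝ) : ℂ) * (g p : ℂ) := by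
    rw [MeasureTheory.integral_finset_sum _ (fun ω' _ =>
      MeasureTheory.integrable_finset_sum _ (fun ω _ => hIntTerm ω' ω))]
    rw [Finset.sum_congr rfl fun ω' _ =>
      MeasureTheory.integral_finset_sum _ (fun ω _ => hIntTerm ω' ω)]
    rw [Finset.sum_congr rfl fun ω' _ => Finset.sum_congr rfl fun ω _ => by
      rw [MeasureTheory.integral_const_mul, intE]]
    have hcoll : ∀ ω' ∈ Omega m,
        (∑ ω ∈ Omega m, (c ω' * Efun ω p) *
          (if ω' - ω = 0 then (((2 * Real.pi) ^ m : ℝ) : ℂ) else 0))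
        = (((2 * Real.pi) ^ m : ℝ) : ℂ) * (c ω' * Efun ω' p) := by
      intro ω' hω'
      rw [Finset.sum_congr rfl fun ω _ => show (c ω' * Efun ω p) *
          (if ω' - ω = 0 then (((2 * Real.pi) ^ m : ℝ) : ℂ) else 0)
          = if ω' = ω then (c ω' * Efun ω p) * (((2 * Real.pi) ^ m : ℝ) : ℂ) else 0 by
        by_cases h : ω' = ω
        · subst h; simp
        · rw [if_neg (fun hh => h (sub_eq_zero.mp hh)), if_neg h, mul_zero]]
      rw [Finset.sum_ite_eq (Omega m) ω'
        (fun ω => (c ω' * Efun ω p) * (((2 * Real.pi) ^ m : ℝ) : ℂ)), if_pos hω']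
      ring
    rw [Finset.sum_congr rfl hcoll, ← Finset.mul_sum, hc p]
    rfl
  rw [hI]
  rw [show ((((2 * Real.pi) ^ m : ℝ) : ℂ) * ((g p : ℝ) : ℂ))
      = ((((2 * Real.pi) ^ m * g p : ℝ)) : ℂ) by push_cast; ring]
  rw [Complex.ofReal_re]
  rw [inv_mul_cancel_left₀ (pow_ne_zero _ (by positivity : (2 * Real.pi) ≠ 0))]

/-- for every `g ∈ H`,
`g = (π/2)^m Σ_{p ∈ (π/2)·{0,1,2,3}^m} ⟨g, K_p⟩_H K_p`, the sum running over all
`4^m` grid points. -/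
theorem expansion_over_grid4 (m : ℕ) (hm : 0 < m)
    (g : (Fin m → ℝ) → ℝ) (hg : g ∈ Hset m) :
    g = (Real.pi / 2) ^ m •
      ∑ s : Fin m → Fin 4, innerH m g (Kfun m (pt4 m s)) • Kfun m (pt4 m s) := by
  obtain ⟨c, hsym, hc⟩ := hg
  funext z
  simp only [Pi.smul_apply, Finset.sum_apply, smul_eq_mul]
  rw [Finset.sum_congr rfl fun s _ => by rw [innerH_K ⟨c, hsym, hc⟩ (pt4 m s)]]
  -- key complex computation
  have hT : ∑ s : Fin m → Fin 4, ((g (pt4 m s) : ℝ) : ℂ) * ∑ ω ∈ Omega m, Efun ω (pt4 m s - z)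
      = (4 : ℂ) ^ m * ((g z : ℝ) : ℂ) := by
    have step1 : ∀ s : Fin m → Fin 4,
        ((g (pt4 m s) : ℝ) : ℂ) * ∑ ω ∈ Omega m, Efun ω (pt4 m s - z)
        = ∑ ω' ∈ Omega m, ∑ ω ∈ Omega m,
            (c ω' * Efun (-ω) z) * Efun (ω + ω') (pt4 m s) := by
      intro s
      rw [hc (pt4 m s), Finset.sum_mul_sum]
      refine Finset.sum_congr rfl fun ω' _ => Finset.sum_congr rfl fun ω _ => ?_
      rw [show (c ω' * Complex.exp (Complex.I * ((dotZ ω' (pt4 m s) : ℝ) : ℂ)))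
            * Efun ω (pt4 m s - z)
          = c ω' * (Efun ω' (pt4 m s) * Efun ω (pt4 m s - z)) by
        simp only [Efun_def]; ring]
      rw [E_mul_shift2]
      ring
    rw [Finset.sum_congr rfl fun s _ => step1 s]
    rw [Finset.sum_comm]
    rw [Finset.sum_congr rfl fun ω' _ => Finset.sum_comm]
    rw [Finset.sum_congr rfl fun ω' hω' => Finset.sum_congr rfl fun ω hω => by
      rw [← Finset.mul_sum, sumS (ω + ω') (fun j => by
        calc |(ω + ω') j| = |ω j + ω' j| := by rw [Pi.add_apply]
          _ ≤ |ω j| + |ω' j| := abs_add_le _ _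
          _ ≤ 2 := by
            have h1 := abs_le_one_of_mem_Omega hω j
            have h2 := abs_le_one_of_mem_Omega hω' j
            omega)]]
    have coll : ∀ ω' ∈ Omega m,
        (∑ ω ∈ Omega m, (c ω' * Efun (-ω) z) *
          (if ω + ω' = 0 then ((4 : ℂ) ^ m) else 0))
        = (c ω' * Efun ω' z) * (4 : ℂ) ^ m := by
      intro ω' hω'
      rw [Finset.sum_congr rfl fun ω _ => show (c ω' * Efun (-ω) z) *
            (if ω + ω' = 0 then ((4 : ℂ) ^ m) else 0)
          = if -ω' = ω then (c ω' * Efun (-ω) z) * (4 : ℂ) ^ m else 0 by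
        by_cases h : -ω' = ω
        · rw [if_pos h, if_pos (by rw [← h]; abel)]
        · rw [if_neg (fun hh : ω + ω' = 0 => h (by
              rw [neg_eq_iff_add_eq_zero, add_comm]; exact hh)), if_neg h, mul_zero]]
      rw [Finset.sum_ite_eq (Omega m) (-ω')
        (fun ω => (c ω' * Efun (-ω) z) * (4 : ℂ) ^ m), if_pos (neg_mem_Omega hω'), neg_neg]
    rw [Finset.sum_congr rfl coll]
    rw [← Finset.sum_mul]
    simp only [Efun_def]
    rw [← hc z]
    ring
  -- now the real computation
  have hterm : ∀ s : Fin m → Fin 4, g (pt4 m s) * Kfun m (pt4 m s) z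
      = ((2 * Real.pi) ^ m)⁻¹ *
        (((g (pt4 m s) : ℝ) : ℂ) * ∑ ω ∈ Omega m, Efun ω (pt4 m s - z)).re := by
    intro s
    rw [Kfun, Kker, Complex.re_ofReal_mul]
    rw [show (∑ ω ∈ Omega m, Complex.exp (Complex.I * ((dotZ ω (pt4 m s - z) : ℝ) : ℂ)))
        = ∑ ω ∈ Omega m, Efun ω (pt4 m s - z) from rfl]
    ring
  rw [Finset.sum_congr rfl fun s _ => hterm s]
  rw [← Finset.mul_sum, ← Complex.re_sum, hT]
  rw [show (4 : ℂ) ^ m * ((g z : ℝ) : ℂ) = (((4 : ℝ) ^ m * g z : ℝ) : ℂ) by push_cast; ring]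
  rw [Complex.ofReal_re]
  have h1 : (Real.pi / 2) ^ m * ((2 * Real.pi) ^ m)⁻¹ * (4 : ℝ) ^ m = 1 := by
    rw [← inv_pow, ← mul_pow, ← mul_pow,
      show Real.pi / 2 * (2 * Real.pi)⁻¹ * 4 = 1 by field_simp; ring, one_pow]
  have hone : (Real.pi / 2) ^ m * (((2 * Real.pi) ^ m)⁻¹ * ((4 : ℝ) ^ m * g z)) = g z := by
    calc (Real.pi / 2) ^ m * (((2 * Real.pi) ^ m)⁻¹ * ((4 : ℝ) ^ m * g z))
        = ((Real.pi / 2) ^ m * ((2 * Real.pi) ^ m)⁻¹ * (4 : ℝ) ^ m) * g z := by ring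
      _ = g z := by rw [h1, one_mul]
  exact hone.symm
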